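/- arXiv:2011.01435 — 7 statements merged into one kernel-verified Lean document; each statement's English description precedes it below -/
import Mathlib

section
/- If ψ : ℝ₊^m → ℝ₊ is convex, differentiable, non-decreasing, satisfies ψ(0) = 0, and has growth of order at most p > 1, then its Fenchel conjugate ψ* satisfies ψ*(δy) ≤ δ^{p/(p-1)} ψ*(y) for every vector y and every scalar δ ∈ (0,1]. -/
open Finset

/-- Fenchel conjugate over the non-negative orthant. -/
noncomputable def conjStar {m : ℕ} (ψ : (Fin m → ℝ) → ℝ) (y : Fin m → ℝ) : ℝ :=
  sSup {z : ℝ | ∃ u : Fin m → ℝ, 0 ≤ u ∧ z = (∑ i, u i * y i) - ψ u}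

private lemma phi_deriv {m : ℕ} (ψ : (Fin m → ℝ) → ℝ) (g : (Fin m → ℝ) → (Fin m → ℝ))
    (hdiff : ∀ u : Fin m → ℝ, 0 ≤ u →
      HasFDerivAt ψ (∑ i, g u i • (ContinuousLinearMap.proj i : (Fin m → ℝ) →L[ℝ] ℝ)) u)
    (u : Fin m → ℝ) (hu : 0 ≤ u) (t : ℝ) (ht : 0 ≤ t) :
    HasDerivAt (fun s : ℝ => ψ (s • u)) (∑ i, g (t • u) i * u i) t := by
  have hline : HasDerivAt (fun s : ℝ => s • u) u t := by
    simpa using (hasDerivAt_id t).smul_const u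
  have h := (hdiff (t • u) (smul_nonneg ht hu)).comp_hasDerivAt t hline
  have e : (∑ i, g (t • u) i • (ContinuousLinearMap.proj i : (Fin m → ℝ) →L[ℝ] ℝ)) u =
      ∑ i, g (t • u) i * u i := by
    simp [ContinuousLinearMap.sum_apply, ContinuousLinearMap.proj_apply, smul_eq_mul, mul_comm]
  rw [e] at h
  exact h

private lemma claim1 {m : ℕ} (p : ℝ) (hp : 1 < p)
    (ψ : (Fin m → ℝ) → ℝ) (g : (Fin m → ℝ) → (Fin m → ℝ))
    (hdiff : ∀ u : Fin m → ℝ, 0 ≤ u →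
      HasFDerivAt ψ (∑ i, g u i • (ContinuousLinearMap.proj i : (Fin m → ℝ) →L[ℝ] ℝ)) u)
    (hzero : ψ 0 = 0)
    (hgrowth : ∀ u : Fin m → ℝ, 0 ≤ u → ∀ α : ℝ, 1 ≤ α → ∀ i, g (α • u) i ≤ α ^ (p - 1) * g u i)
    (u : Fin m → ℝ) (hu : 0 ≤ u) :
    ∑ i, g u i * u i ≤ p * ψ u := by
  have hppos : (0:ℝ) < p := lt_trans one_pos hp
  set C : ℝ := ∑ i, g u i * u i with hC
  set F : ℝ → ℝ := fun t => ψ (t • u) - t ^ p * (C / p) with hF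
  have hderivF : ∀ t : ℝ, 0 < t →
      HasDerivAt F ((∑ i, g (t • u) i * u i) - (p * t ^ (p - 1)) * (C / p)) t := by
    intro t ht
    exact (phi_deriv ψ g hdiff u hu t ht.le).sub
      ((Real.hasDerivAt_rpow_const (Or.inl ht.ne')).mul_const (C / p))
  have hmonoF : MonotoneOn F (Set.Icc (0:ℝ) 1) := by
    apply monotoneOn_of_deriv_nonneg (convex_Icc 0 1)
    · intro t ht
      rcases eq_or_lt_of_le ht.1 with h0 | h0
      · -- t = 0 : continuity
        apply ContinuousWithinAt.sub
        · -- ψ is continuous at 0 • u along the line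
          have : ContinuousAt (fun s : ℝ => ψ (s • u)) t := by
            exact (phi_deriv ψ g hdiff u hu t ht.1).continuousAt
          exact this.continuousWithinAt
        · apply ContinuousWithinAt.mul _ continuousWithinAt_const
          have : ContinuousAt (fun s : ℝ => s ^ p) t := by
            rw [← h0]
            exact Real.continuousAt_rpow_const 0 p (Or.inr hppos.le)
          exact this.continuousWithinAt
      · exact ((hderivF t h0).continuousAt).continuousWithinAt
    · intro t ht
      rw [interior_Icc] at ht
      exact ((hderivF t ht.1).differentiableAt).differentiableWithinAt
    · intro t ht
      rw [interior_Icc] at ht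
      rw [(hderivF t ht.1).deriv]
      have hkey : t ^ (p - 1) * C ≤ ∑ i, g (t • u) i * u i := by
        rw [hC, Finset.mul_sum]
        apply Finset.sum_le_sum
        intro i _
        have h1 : g u i ≤ t⁻¹ ^ (p - 1) * g (t • u) i := by
          have := hgrowth (t • u) (smul_nonneg ht.1.le hu) t⁻¹
            ((one_le_inv₀ ht.1).mpr ht.2.le) i
          · simpa [smul_smul, inv_mul_cancel₀ (ne_of_gt ht.1)] using this
        have htp : (0:ℝ) < t ^ (p - 1) := Real.rpow_pos_of_pos ht.1 _
        have h2 : t ^ (p - 1) * g u i ≤ g (t • u) i := by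
          have := mul_le_mul_of_nonneg_left h1 htp.le
          rwa [Real.inv_rpow ht.1.le, ← mul_assoc, mul_inv_cancel₀ (ne_of_gt htp),
            one_mul] at this
        calc t ^ (p - 1) * (g u i * u i) = (t ^ (p - 1) * g u i) * u i := by ring
          _ ≤ g (t • u) i * u i := mul_le_mul_of_nonneg_right h2 (hu i)
      have : (p * t ^ (p - 1)) * (C / p) = t ^ (p - 1) * C := by
        field_simp
      rw [this]
      linarith
  have hF01 : F 0 ≤ F 1 := hmonoF (Set.mem_Icc.mpr ⟨le_refl 0, zero_le_one⟩)
    (Set.mem_Icc.mpr ⟨zero_le_one, le_refl 1⟩) zero_le_one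
  have hF0 : F 0 = 0 := by
    simp [hF, Real.zero_rpow (ne_of_gt hppos), hzero]
  have hF1 : F 1 = ψ u - C / p := by
    simp [hF, Real.one_rpow]
  rw [hF0, hF1] at hF01
  have : C / p ≤ ψ u := by linarith
  calc C = p * (C / p) := by field_simp
    _ ≤ p * ψ u := mul_le_mul_of_nonneg_left this hppos.le

private lemma claim2 {m : ℕ} (p : ℝ) (hp : 1 < p)
    (ψ : (Fin m → ℝ) → ℝ) (g : (Fin m → ℝ) → (Fin m → ℝ))
    (hdiff : ∀ u : Fin m → ℝ, 0 ≤ u →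
      HasFDerivAt ψ (∑ i, g u i • (ContinuousLinearMap.proj i : (Fin m → ℝ) →L[ℝ] ℝ)) u)
    (hzero : ψ 0 = 0)
    (hgrowth : ∀ u : Fin m → ℝ, 0 ≤ u → ∀ α : ℝ, 1 ≤ α → ∀ i, g (α • u) i ≤ α ^ (p - 1) * g u i)
    (u : Fin m → ℝ) (hu : 0 ≤ u) (α : ℝ) (hα : 1 ≤ α) :
    ψ (α • u) ≤ α ^ p * ψ u := by
  have hppos : (0:ℝ) < p := lt_trans one_pos hp
  set G : ℝ → ℝ := fun t => t ^ p * ψ u - ψ (t • u) with hG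
  have hderivG : ∀ t : ℝ, 0 < t →
      HasDerivAt G ((p * t ^ (p - 1)) * ψ u - (∑ i, g (t • u) i * u i)) t := by
    intro t ht
    exact ((Real.hasDerivAt_rpow_const (Or.inl ht.ne')).mul_const (ψ u)).sub
      (phi_deriv ψ g hdiff u hu t ht.le)
  have hC1 := claim1 p hp ψ g hdiff hzero hgrowth u hu
  have hmonoG : MonotoneOn G (Set.Icc (1:ℝ) α) := by
    apply monotoneOn_of_deriv_nonneg (convex_Icc 1 α)
    · intro t ht
      exact ((hderivG t (lt_of_lt_of_le one_pos ht.1)).continuousAt).continuousWithinAt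
    · intro t ht
      rw [interior_Icc] at ht
      exact ((hderivG t (lt_trans one_pos ht.1)).differentiableAt).differentiableWithinAt
    · intro t ht
      rw [interior_Icc] at ht
      have ht1 : (1:ℝ) ≤ t := ht.1.le
      have htpos : (0:ℝ) < t := lt_trans one_pos ht.1
      rw [(hderivG t htpos).deriv]
      have hkey : (∑ i, g (t • u) i * u i) ≤ t ^ (p - 1) * ∑ i, g u i * u i := by
        rw [Finset.mul_sum]
        apply Finset.sum_le_sum
        intro i _
        have h1 := hgrowth u hu t ht1 i
        calc g (t • u) i * u i ≤ (t ^ (p - 1) * g u i) * u i :=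
              mul_le_mul_of_nonneg_right h1 (hu i)
          _ = t ^ (p - 1) * (g u i * u i) := by ring
      have htp : (0:ℝ) ≤ t ^ (p - 1) := (Real.rpow_pos_of_pos htpos _).le
      have h2 : t ^ (p - 1) * (∑ i, g u i * u i) ≤ t ^ (p - 1) * (p * ψ u) :=
        mul_le_mul_of_nonneg_left hC1 htp
      have : (p * t ^ (p - 1)) * ψ u = t ^ (p - 1) * (p * ψ u) := by ring
      rw [this]
      linarith
  have hG1α : G 1 ≤ G α := hmonoG (Set.mem_Icc.mpr ⟨le_refl 1, hα⟩)
    (Set.mem_Icc.mpr ⟨hα, le_refl α⟩) hα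
  have hG1 : G 1 = 0 := by simp [hG, Real.one_rpow]
  rw [hG1] at hG1α
  simp only [hG] at hG1α
  linarith

/-- under convexity, differentiability, monotonicity, ψ(0)=0 and growth of order
at most p > 1, the Fenchel conjugate satisfies ψ*(δy) ≤ δ^{p/(p-1)} ψ*(y) for δ ∈ (0,1]. -/
theorem stmt1 {m : ℕ} (p : ℝ) (hp : 1 < p)
    (ψ : (Fin m → ℝ) → ℝ) (g : (Fin m → ℝ) → (Fin m → ℝ))
    (hψnonneg : ∀ u : Fin m → ℝ, 0 ≤ u → 0 ≤ ψ u)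
    (hconv : ConvexOn ℝ {u : Fin m → ℝ | 0 ≤ u} ψ)
    (hdiff : ∀ u : Fin m → ℝ, 0 ≤ u →
      HasFDerivAt ψ (∑ i, g u i • (ContinuousLinearMap.proj i : (Fin m → ℝ) →L[ℝ] ℝ)) u)
    (hmono : ∀ u v : Fin m → ℝ, 0 ≤ u → u ≤ v → ψ u ≤ ψ v)
    (hzero : ψ 0 = 0)
    (hgrowth : ∀ u : Fin m → ℝ, 0 ≤ u → ∀ α : ℝ, 1 ≤ α → ∀ i, g (α • u) i ≤ α ^ (p - 1) * g u i)
    (hbdd : ∀ y : Fin m → ℝ, BddAbove {z : ℝ | ∃ u : Fin m → ℝ, 0 ≤ u ∧ z = (∑ i, u i * y i) - ψ u}) :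
    ∀ (y : Fin m → ℝ) (δ : ℝ), 0 < δ → δ ≤ 1 →
      conjStar ψ (δ • y) ≤ δ ^ (p / (p - 1)) * conjStar ψ y := by
  intro y δ hδ hδ1
  have hp1 : (0:ℝ) < p - 1 := by linarith
  set β : ℝ := δ ^ (p - 1)⁻¹ with hβ
  have hβpos : 0 < β := Real.rpow_pos_of_pos hδ _
  have hβ1 : β ≤ 1 := Real.rpow_le_one hδ.le hδ1 (by positivity)
  have hexp : (1:ℝ) + (p - 1)⁻¹ = p / (p - 1) := by
    field_simp
    ring
  have hδβ : δ * β = δ ^ (p / (p - 1)) := by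
    rw [← hexp, Real.rpow_add hδ, Real.rpow_one, hβ]
  have hβp : β ^ p = δ ^ (p / (p - 1)) := by
    rw [hβ, ← Real.rpow_mul hδ.le]
    congr 1
    field_simp
  have hq : (0:ℝ) < δ ^ (p / (p - 1)) := Real.rpow_pos_of_pos hδ _
  rw [conjStar]
  apply csSup_le
  · exact ⟨(∑ i, (0:Fin m → ℝ) i * (δ • y) i) - ψ 0, 0, le_refl 0, rfl⟩
  · rintro z ⟨u, hu, rfl⟩
    set v : Fin m → ℝ := β⁻¹ • u with hv
    have hvnn : (0:Fin m → ℝ) ≤ v := smul_nonneg (inv_nonneg.mpr hβpos.le) hu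
    have huv : u = β • v := (smul_inv_smul₀ hβpos.ne' u).symm
    have hψuv : β ^ p * ψ v ≤ ψ u := by
      have h := claim2 p hp ψ g hdiff hzero hgrowth u hu β⁻¹ ((one_le_inv₀ hβpos).mpr hβ1)
      have h2 : ψ v ≤ (β ^ p)⁻¹ * ψ u := by
        rwa [Real.inv_rpow hβpos.le] at h
      have hβppos : (0:ℝ) < β ^ p := Real.rpow_pos_of_pos hβpos _
      calc β ^ p * ψ v ≤ β ^ p * ((β ^ p)⁻¹ * ψ u) :=
            mul_le_mul_of_nonneg_left h2 hβppos.le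
        _ = ψ u := by field_simp
    have hsum : (∑ i, u i * (δ • y) i) = δ ^ (p / (p - 1)) * ∑ i, v i * y i := by
      rw [← hδβ, Finset.mul_sum]
      apply Finset.sum_congr rfl
      intro i _
      rw [huv]
      simp only [Pi.smul_apply, smul_eq_mul]
      ring
    have hmem : (∑ i, v i * y i) - ψ v ∈
        {z : ℝ | ∃ u : Fin m → ℝ, 0 ≤ u ∧ z = (∑ i, u i * y i) - ψ u} :=
      ⟨v, hvnn, rfl⟩
    have hle : (∑ i, v i * y i) - ψ v ≤ conjStar ψ y := le_csSup (hbdd y) hmem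
    calc (∑ i, u i * (δ • y) i) - ψ u
        ≤ δ ^ (p / (p - 1)) * (∑ i, v i * y i) - β ^ p * ψ v := by
          rw [hsum]; linarith
      _ = δ ^ (p / (p - 1)) * ((∑ i, v i * y i) - ψ v) := by rw [hβp]; ring
      _ ≤ δ ^ (p / (p - 1)) * conjStar ψ y := mul_le_mul_of_nonneg_left hle hq.le
end

section
/- If ψ : ℝ₊^m → ℝ₊ is convex, differentiable, non-decreasing, satisfies ψ(0) = 0, and has growth of order at most p > 1, then ψ*(∇ψ(u)) ≤ p · ψ(u) for every u in the non-negative orthant, where ψ* is the Fenchel conjugate of ψ. -/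
open Finset

lemma eval_sum_proj {m : ℕ} (c w : Fin m → ℝ) :
    (∑ i, c i • (ContinuousLinearMap.proj i : (Fin m → ℝ) →L[ℝ] ℝ)) w = ∑ i, c i * w i := by
  simp [ContinuousLinearMap.sum_apply]

/-- Subgradient inequality: for convex differentiable ψ on the orthant. -/
lemma grad_ineq {m : ℕ} (ψ : (Fin m → ℝ) → ℝ) (g : (Fin m → ℝ) → (Fin m → ℝ))
    (hconv : ConvexOn ℝ {u : Fin m → ℝ | 0 ≤ u} ψ)
    (hdiff : ∀ u : Fin m → ℝ, 0 ≤ u →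
      HasFDerivAt ψ (∑ i, g u i • (ContinuousLinearMap.proj i : (Fin m → ℝ) →L[ℝ] ℝ)) u)
    (u v : Fin m → ℝ) (hu : 0 ≤ u) (hv : 0 ≤ v) :
    ψ u + ∑ i, g u i * (v i - u i) ≤ ψ v := by
  set L : ℝ →ᵃ[ℝ] (Fin m → ℝ) := AffineMap.lineMap u v with hL
  have hLapp : ∀ t : ℝ, L t = t • (v - u) + u := by
    intro t; simp [hL, AffineMap.lineMap_apply_module']
  have hφ : ConvexOn ℝ (⇑L ⁻¹' {u : Fin m → ℝ | 0 ≤ u}) (ψ ∘ ⇑L) :=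
    hconv.comp_affineMap L
  have h0 : (0 : ℝ) ∈ ⇑L ⁻¹' {u : Fin m → ℝ | 0 ≤ u} := by
    simp only [Set.mem_preimage, hLapp]; simpa using hu
  have h1 : (1 : ℝ) ∈ ⇑L ⁻¹' {u : Fin m → ℝ | 0 ≤ u} := by
    simp only [Set.mem_preimage, hLapp]; simpa using hv
  have hline : HasDerivAt (fun t : ℝ => t • (v - u) + u) (v - u) 0 := by
    simpa using ((hasDerivAt_id (0 : ℝ)).smul_const (v - u)).add_const u
  have hd : HasDerivAt (ψ ∘ ⇑L)
      ((∑ i, g u i • (ContinuousLinearMap.proj i : (Fin m → ℝ) →L[ℝ] ℝ)) (v - u)) 0 := by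
    have e : (0 : ℝ) • (v - u) + u = u := by simp
    have hF : HasFDerivAt ψ (∑ i, g u i • (ContinuousLinearMap.proj i : (Fin m → ℝ) →L[ℝ] ℝ))
        ((0 : ℝ) • (v - u) + u) := by rw [e]; exact hdiff u hu
    have h := hF.comp_hasDerivAt 0 hline
    have hfun : ψ ∘ ⇑L = fun t : ℝ => ψ (t • (v - u) + u) := by
      funext t; simp [hLapp]
    rw [hfun]
    exact h
  have := hφ.le_slope_of_hasDerivAt h0 h1 zero_lt_one hd
  rw [slope_def_field] at this
  have heval : (∑ i, g u i • (ContinuousLinearMap.proj i : (Fin m → ℝ) →L[ℝ] ℝ)) (v - u)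
      = ∑ i, g u i * (v i - u i) := by
    rw [eval_sum_proj]; simp [Pi.sub_apply]
  rw [heval] at this
  have hL0 : (ψ ∘ ⇑L) 0 = ψ u := by simp [hLapp]
  have hL1 : (ψ ∘ ⇑L) 1 = ψ v := by simp [hLapp]
  rw [hL0, hL1] at this
  simp only [div_one, sub_zero] at this
  linarith

/-- under convexity, differentiability, monotonicity, ψ(0)=0 and growth of order
at most p > 1, we have ψ*(∇ψ(u)) ≤ p·ψ(u) for every u ≥ 0. -/
theorem stmt2 {m : ℕ} (p : ℝ) (hp : 1 < p)
    (ψ : (Fin m → ℝ) → ℝ) (g : (Fin m → ℝ) → (Fin m → ℝ))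
    (hψnonneg : ∀ u : Fin m → ℝ, 0 ≤ u → 0 ≤ ψ u)
    (hconv : ConvexOn ℝ {u : Fin m → ℝ | 0 ≤ u} ψ)
    (hdiff : ∀ u : Fin m → ℝ, 0 ≤ u →
      HasFDerivAt ψ (∑ i, g u i • (ContinuousLinearMap.proj i : (Fin m → ℝ) →L[ℝ] ℝ)) u)
    (hmono : ∀ u v : Fin m → ℝ, 0 ≤ u → u ≤ v → ψ u ≤ ψ v)
    (hzero : ψ 0 = 0)
    (hgrowth : ∀ u : Fin m → ℝ, 0 ≤ u → ∀ α : ℝ, 1 ≤ α → ∀ i, g (α • u) i ≤ α ^ (p - 1) * g u i)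
    (hbdd : ∀ y : Fin m → ℝ, BddAbove {z : ℝ | ∃ u : Fin m → ℝ, 0 ≤ u ∧ z = (∑ i, u i * y i) - ψ u}) :
    ∀ u : Fin m → ℝ, 0 ≤ u → conjStar ψ (g u) ≤ p * ψ u := by
  intro u hu
  have hp0 : (0 : ℝ) < p := by linarith
  set c : ℝ := ∑ i, u i * g u i with hc
  -- key inequality : c ≤ p * ψ u
  have hkey : c ≤ p * ψ u := by
    set H : ℝ → ℝ := fun t => ψ (t • u) - (c / p) * t ^ p with hH
    have hsmul : ∀ t : ℝ, 0 ≤ t → 0 ≤ t • u := by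
      intro t ht i; exact mul_nonneg ht (hu i)
    have hmonoH : MonotoneOn H (Set.Icc 0 1) := by
      apply monotoneOn_of_hasDerivWithinAt_nonneg (f' := fun t =>
          (∑ i, g (t • u) i * u i) - (c / p) * (p * t ^ (p - 1))) (convex_Icc 0 1)
      · -- continuity
        apply ContinuousOn.sub
        · intro t ht
          have h1 : ContinuousAt ψ (t • u) :=
            (hdiff _ (hsmul t ht.1)).differentiableAt.continuousAt
          have h2 : ContinuousAt (fun s : ℝ => s • u) t :=
            (continuous_id.smul continuous_const).continuousAt
          have h3 : ContinuousAt (fun s : ℝ => ψ (s • u)) t :=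
            ContinuousAt.comp (f := fun s : ℝ => s • u) (x := t) h1 h2
          exact h3.continuousWithinAt
        · apply ContinuousOn.mul continuousOn_const
          intro t ht
          exact (Real.continuousAt_rpow_const t p (Or.inr hp0.le)).continuousWithinAt
      · -- derivative
        intro t ht
        rw [interior_Icc] at ht
        have hline : HasDerivAt (fun s : ℝ => s • u) u t := by
          simpa using (hasDerivAt_id t).smul_const u
        have hψd : HasDerivAt (fun s : ℝ => ψ (s • u)) (∑ i, g (t • u) i * u i) t := by
          have := (hdiff (t • u) (hsmul t ht.1.le)).comp_hasDerivAt t hline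
          simp [eval_sum_proj] at this
          exact this
        have hrp : HasDerivAt (fun s : ℝ => s ^ p) (p * t ^ (p - 1)) t :=
          Real.hasDerivAt_rpow_const (Or.inl (ne_of_gt ht.1))
        exact ((hψd.sub ((hrp.const_mul (c / p)))).hasDerivWithinAt)
      · -- nonnegativity of derivative
        intro t ht
        rw [interior_Icc] at ht
        have ht0 : 0 < t := ht.1
        have htinv : 1 ≤ 1 / t := by
          rw [le_div_iff₀ ht0]; linarith [ht.2]
        have hrec : (1 / t) • (t • u) = u := by
          rw [smul_smul, one_div, inv_mul_cancel₀ (ne_of_gt ht0), one_smul]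
        have hgi : ∀ i, g u i ≤ (1 / t) ^ (p - 1) * g (t • u) i := by
          intro i
          have := hgrowth (t • u) (hsmul t ht0.le) (1 / t) htinv i
          rwa [hrec] at this
        have hsum : c ≤ (1 / t) ^ (p - 1) * ∑ i, u i * g (t • u) i := by
          rw [Finset.mul_sum, hc]
          apply Finset.sum_le_sum
          intro i _
          calc u i * g u i ≤ u i * ((1 / t) ^ (p - 1) * g (t • u) i) :=
                mul_le_mul_of_nonneg_left (hgi i) (hu i)
            _ = (1 / t) ^ (p - 1) * (u i * g (t • u) i) := by ring
        have htp : (0 : ℝ) < t ^ (p - 1) := Real.rpow_pos_of_pos ht0 _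
        have hmul : t ^ (p - 1) * c ≤ ∑ i, u i * g (t • u) i := by
          have h2 := mul_le_mul_of_nonneg_left hsum htp.le
          have h3 : t ^ (p - 1) * ((1 / t) ^ (p - 1) * ∑ i, u i * g (t • u) i)
              = ∑ i, u i * g (t • u) i := by
            rw [← mul_assoc, ← Real.mul_rpow ht0.le (by positivity)]
            rw [mul_one_div, div_self (ne_of_gt ht0), Real.one_rpow, one_mul]
          rw [h3] at h2
          exact h2
        have hcom : ∀ i, g (t • u) i * u i = u i * g (t • u) i := fun i => mul_comm _ _
        have hcp : (c / p) * (p * t ^ (p - 1)) = t ^ (p - 1) * c := by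
          field_simp
        rw [hcp]
        simp only [hcom]
        linarith
    have h01 : H 0 ≤ H 1 := hmonoH (by simp) (by norm_num) zero_le_one
    have hH0 : H 0 = 0 := by
      simp [hH, Real.zero_rpow (ne_of_gt hp0), hzero]
    have hH1 : H 1 = ψ u - c / p := by
      simp [hH, Real.one_rpow]
    rw [hH0, hH1] at h01
    have : c / p ≤ ψ u := by linarith
    calc c = p * (c / p) := by field_simp
      _ ≤ p * ψ u := by exact mul_le_mul_of_nonneg_left this hp0.le
  -- now bound the sup
  apply Real.sSup_le
  · rintro z ⟨v, hv, rfl⟩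
    have hsub := grad_ineq ψ g hconv hdiff u v hu hv
    have hψu : 0 ≤ ψ u := hψnonneg u hu
    have hexp : ∑ i, g u i * (v i - u i) = (∑ i, v i * g u i) - c := by
      rw [hc, ← Finset.sum_sub_distrib]
      apply Finset.sum_congr rfl
      intro i _; ring
    rw [hexp] at hsub
    linarith
  · exact mul_nonneg hp0.le (hψnonneg u hu)
end

section
/- Let ψ : ℝ₊^m → ℝ₊ be convex, differentiable, with ψ(0) = 0, and with growth of order at most p > 1 (coordinatewise ∇ψ(αu) ≤ α^{p-1} ∇ψ(u) for α ≥ 1). Then for every u ≥ 0, ⟨∇ψ(u), u⟩ ≤ p · ψ(u). -/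
open Finset

/-- if ψ is convex, differentiable on the non-negative orthant, ψ(0) = 0, and has
growth of order at most p > 1, then ⟨∇ψ(u), u⟩ ≤ p·ψ(u) for every u ≥ 0. -/
theorem stmt3 {m : ℕ} (p : ℝ) (hp : 1 < p)
    (ψ : (Fin m → ℝ) → ℝ) (g : (Fin m → ℝ) → (Fin m → ℝ))
    (hψnonneg : ∀ u : Fin m → ℝ, 0 ≤ u → 0 ≤ ψ u)
    (hconv : ConvexOn ℝ {u : Fin m → ℝ | 0 ≤ u} ψ)
    (hdiff : ∀ u : Fin m → ℝ, 0 ≤ u →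
      HasFDerivAt ψ (∑ i, g u i • (ContinuousLinearMap.proj i : (Fin m → ℝ) →L[ℝ] ℝ)) u)
    (hzero : ψ 0 = 0)
    (hgrowth : ∀ u : Fin m → ℝ, 0 ≤ u → ∀ α : ℝ, 1 ≤ α → ∀ i, g (α • u) i ≤ α ^ (p - 1) * g u i) :
    ∀ u : Fin m → ℝ, 0 ≤ u → (∑ i, g u i * u i) ≤ p * ψ u := by
  intro u hu
  set φ : ℝ → ℝ := fun t => ψ (t • u) with hφ
  set h : ℝ → ℝ := fun t => ∑ i, g (t • u) i * u i with hh
  have hp0 : (0:ℝ) < p := lt_trans one_pos hp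
  have hsmul_nonneg : ∀ t : ℝ, 0 ≤ t → (0 : Fin m → ℝ) ≤ t • u := by
    intro t ht i
    exact mul_nonneg ht (hu i)
  -- derivative of φ
  have hderiv : ∀ t : ℝ, 0 ≤ t → HasDerivAt φ (h t) t := by
    intro t ht
    have h1 : HasDerivAt (fun y : ℝ => y • u) ((1:ℝ) • u) t :=
      (hasDerivAt_id t).smul_const u
    have h2 := (hdiff (t • u) (hsmul_nonneg t ht)).comp_hasDerivAt t h1
    refine h2.congr_deriv ?_
    simp [hh, ContinuousLinearMap.sum_apply, mul_comm]
  -- convexity of φ on Ici 0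
  have hφconv : ConvexOn ℝ (Set.Ici (0:ℝ)) φ := by
    refine ⟨convex_Ici 0, ?_⟩
    intro s hs t ht a b ha hb hab
    have := hconv.2 (hsmul_nonneg s hs) (hsmul_nonneg t ht) ha hb hab
    simpa [hφ, smul_smul, add_smul, mul_comm] using this
  -- h is monotone on Icc 0 1
  have hmono : MonotoneOn h (Set.Icc (0:ℝ) 1) := by
    intro s hs t ht hst
    rcases eq_or_lt_of_le hst with rfl | hst'
    · exact le_refl _
    · calc h s ≤ slope φ s t :=
            hφconv.le_slope_of_hasDerivAt (Set.mem_Ici.mpr hs.1) (Set.mem_Ici.mpr ht.1)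
              hst' (hderiv s hs.1)
        _ ≤ h t :=
            hφconv.slope_le_of_hasDerivAt (Set.mem_Ici.mpr hs.1) (Set.mem_Ici.mpr ht.1)
              hst' (hderiv t ht.1)
  have hint : IntervalIntegrable h MeasureTheory.volume 0 1 := by
    apply MonotoneOn.intervalIntegrable
    rwa [Set.uIcc_of_le zero_le_one]
  -- FTC
  have hftc : ∫ t in (0:ℝ)..1, h t = φ 1 - φ 0 := by
    apply intervalIntegral.integral_eq_sub_of_hasDerivAt
    · intro t htmem
      rw [Set.uIcc_of_le zero_le_one] at htmem
      exact hderiv t htmem.1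
    · exact hint
  set c : ℝ := ∑ i, g u i * u i with hc
  -- lower bound on h for t ∈ (0,1]
  have hlow : ∀ t : ℝ, 0 < t → t ≤ 1 → t ^ (p - 1) * c ≤ h t := by
    intro t ht ht1
    have htinv : 1 ≤ t⁻¹ := (one_le_inv₀ ht).mpr ht1
    have key : ∀ i, t ^ (p - 1) * g u i ≤ g (t • u) i := by
      intro i
      have := hgrowth (t • u) (hsmul_nonneg t ht.le) t⁻¹ htinv i
      rw [smul_smul, inv_mul_cancel₀ ht.ne', one_smul] at this
      have hti : (t⁻¹ : ℝ) ^ (p - 1) = (t ^ (p - 1))⁻¹ := Real.inv_rpow ht.le _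
      rw [hti] at this
      have htp : (0:ℝ) < t ^ (p - 1) := Real.rpow_pos_of_pos ht _
      calc t ^ (p - 1) * g u i ≤ t ^ (p - 1) * ((t ^ (p - 1))⁻¹ * g (t • u) i) :=
            mul_le_mul_of_nonneg_left this htp.le
        _ = g (t • u) i := by field_simp
    rw [hc, Finset.mul_sum]
    apply Finset.sum_le_sum
    intro i _
    calc t ^ (p - 1) * (g u i * u i) = (t ^ (p - 1) * g u i) * u i := by ring
      _ ≤ g (t • u) i * u i := mul_le_mul_of_nonneg_right (key i) (hu i)
  -- integrability of lower bound
  have hcont : ContinuousOn (fun t : ℝ => t ^ (p - 1) * c) (Set.Icc (0:ℝ) 1) := by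
    apply ContinuousOn.mul _ continuousOn_const
    intro x hx
    exact (Real.continuousAt_rpow_const x (p-1) (Or.inr (by linarith))).continuousWithinAt
  have hint2 : IntervalIntegrable (fun t : ℝ => t ^ (p - 1) * c) MeasureTheory.volume 0 1 := by
    apply ContinuousOn.intervalIntegrable
    rwa [Set.uIcc_of_le zero_le_one]
  -- integral comparison (a.e. since t = 0 may fail)
  have hcomp : ∫ t in (0:ℝ)..1, t ^ (p - 1) * c ≤ ∫ t in (0:ℝ)..1, h t := by
    apply intervalIntegral.integral_mono_ae_restrict zero_le_one hint2 hint
    have hsub : {t : ℝ | ¬ (t ^ (p - 1) * c ≤ h t)} ∩ Set.Icc (0:ℝ) 1 ⊆ {0} := by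
      intro t ⟨htbad, htmem⟩
      by_contra ht0
      rcases lt_or_eq_of_le htmem.1 with hpos | heq
      · exact htbad (hlow t hpos htmem.2)
      · exact ht0 heq.symm
    rw [Filter.EventuallyLE, MeasureTheory.ae_restrict_iff' measurableSet_Icc]
    rw [MeasureTheory.ae_iff]
    apply MeasureTheory.measure_mono_null (t := {(0:ℝ)})
    · intro t ht
      simp only [Set.mem_setOf_eq, Classical.not_imp] at ht
      exact hsub ⟨ht.2, ht.1⟩
    · exact MeasureTheory.measure_singleton 0
  -- compute the lower integral
  have hval : ∫ t in (0:ℝ)..1, t ^ (p - 1) * c = c / p := by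
    rw [intervalIntegral.integral_mul_const, integral_rpow (Or.inl (by linarith))]
    rw [sub_add_cancel, Real.one_rpow, Real.zero_rpow hp0.ne']
    ring
  have hφ1 : φ 1 = ψ u := by simp [hφ]
  have hφ0 : φ 0 = 0 := by simp [hφ, hzero]
  have : c / p ≤ ψ u := by
    rw [← hval, ← hφ1]
    calc ∫ t in (0:ℝ)..1, t ^ (p - 1) * c ≤ ∫ t in (0:ℝ)..1, h t := hcomp
      _ = φ 1 - φ 0 := hftc
      _ = φ 1 := by rw [hφ0, sub_zero]
  calc (∑ i, g u i * u i) = c := rfl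
    _ ≤ p * ψ u := by
        rw [div_le_iff₀ hp0] at this
        linarith [this]
end

section
/- Let v₁, …, v_n ∈ [0,1]^m and γ₁, …, γ_n ∈ {0, γ̄} with γ̄ ≤ 1/(4p) and p ≥ 1. Define w_t = (4p·𝟙 + v₁ + … + v_{t-1}) / (4(1 + γ₁ + … + γ_{t-1} + γ̄)) and w̃_{t+1} = (4p·𝟙 + v₁ + … + v_t) / (4(1 + γ₁ + … + γ_t)). Then w_t ≤ w̃_{t+1} ≤ 2^{1/p} w_t coordinatewise. -/
open Finset

lemma aux_exp (p : ℝ) (hp : 1 ≤ p) : 1 + 1/(4*p) ≤ (2:ℝ)^(1/(2*p)) := by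
  have hp0 : (0:ℝ) < p := by linarith
  have h2 : (2:ℝ)^(1/(2*p)) = Real.exp (Real.log 2 * (1/(2*p))) := by
    rw [Real.rpow_def_of_pos (by norm_num)]
  rw [h2]
  have hexp := Real.add_one_le_exp (Real.log 2 * (1/(2*p)))
  have hlog : (0.6931471803 : ℝ) < Real.log 2 := Real.log_two_gt_d9
  have hdiff : Real.log 2 * (1/(2*p)) - 1/(4*p) = (Real.log 2 - 1/2)/(2*p) := by
    field_simp
    ring
  have hpos : (0:ℝ) ≤ (Real.log 2 - 1/2)/(2*p) := by
    apply div_nonneg <;> linarith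
  linarith
lemma aux_sq (p : ℝ) (hp : 1 ≤ p) :
    (2:ℝ)^(1/(2*p)) * (2:ℝ)^(1/(2*p)) = (2:ℝ)^(1/p) := by
  have hp0 : (0:ℝ) < p := by linarith
  rw [← Real.rpow_add (by norm_num)]
  have : 1/(2*p) + 1/(2*p) = 1/p := by
    rw [← add_div]
    rw [eq_div_iff hp0.ne', div_mul_eq_mul_div,
      div_eq_iff (by positivity : (2:ℝ)*p ≠ 0)]
    ring
  rw [this]

/-- with v₁,…,v_n ∈ [0,1]^m (0-indexed here: v 0, …, v (n-1)), γ_t ∈ {0, γ̄},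
0 < γ̄ ≤ 1/(4p), p ≥ 1, setting
w_t = (4p·𝟙 + v₁ + … + v_{t-1}) / (4(1 + γ₁ + … + γ_{t-1} + γ̄)) and
w̃_{t+1} = (4p·𝟙 + v₁ + … + v_t) / (4(1 + γ₁ + … + γ_t)),
we have w_t ≤ w̃_{t+1} ≤ 2^{1/p} w_t coordinatewise. -/
theorem stmt12 {m : ℕ} (n : ℕ) (p : ℝ) (hp : 1 ≤ p)
    (v : ℕ → (Fin m → ℝ)) (γ : ℕ → ℝ) (γbar : ℝ)
    (hγbarpos : 0 < γbar) (hγbar : γbar ≤ 1 / (4 * p))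
    (hv : ∀ t, t < n → ∀ i, v t i ∈ Set.Icc (0 : ℝ) 1)
    (hγ : ∀ t, t < n → γ t = 0 ∨ γ t = γbar) :
    ∀ t, t < n →
      ∀ i : Fin m,
        ((4 * p + ∑ t' ∈ Finset.range t, v t' i) /
            (4 * (1 + (∑ t' ∈ Finset.range t, γ t') + γbar)))
          ≤ ((4 * p + ∑ t' ∈ Finset.range (t + 1), v t' i) /
              (4 * (1 + ∑ t' ∈ Finset.range (t + 1), γ t'))) ∧
        ((4 * p + ∑ t' ∈ Finset.range (t + 1), v t' i) /
            (4 * (1 + ∑ t' ∈ Finset.range (t + 1), γ t')))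
          ≤ (2 : ℝ) ^ (1 / p) *
            ((4 * p + ∑ t' ∈ Finset.range t, v t' i) /
              (4 * (1 + (∑ t' ∈ Finset.range t, γ t') + γbar))) := by
  intro t ht i
  have hp0 : (0:ℝ) < p := by linarith
  set S := ∑ t' ∈ Finset.range t, v t' i with hSdef
  set G := ∑ t' ∈ Finset.range t, γ t' with hGdef
  have hsumv : ∑ t' ∈ Finset.range (t+1), v t' i = S + v t i :=
    Finset.sum_range_succ _ _
  have hsumγ : ∑ t' ∈ Finset.range (t+1), γ t' = G + γ t :=
    Finset.sum_range_succ _ _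
  rw [hsumv, hsumγ]
  obtain ⟨hv0, hv1⟩ := hv t ht i
  have hS : 0 ≤ S := by
    apply Finset.sum_nonneg
    intro j hj
    exact (hv j (lt_of_lt_of_le (Finset.mem_range.mp hj) (le_of_lt ht)) i).1
  have hG : 0 ≤ G := by
    apply Finset.sum_nonneg
    intro j hj
    rcases hγ j (lt_of_lt_of_le (Finset.mem_range.mp hj) (le_of_lt ht)) with h | h
    · simp [h]
    · rw [h]; exact le_of_lt hγbarpos
  have hγt := hγ t ht
  have hγt0 : 0 ≤ γ t := by
    rcases hγt with h | h
    · simp [h]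
    · rw [h]; exact le_of_lt hγbarpos
  have hγtb : γ t ≤ γbar := by
    rcases hγt with h | h
    · rw [h]; exact le_of_lt hγbarpos
    · rw [h]
  have hA : (0:ℝ) < 4 * p + S := by linarith
  have hD1 : (0:ℝ) < 4 * (1 + G + γbar) := by linarith
  have hD2 : (0:ℝ) < 4 * (1 + (G + γ t)) := by linarith
  constructor
  · exact div_le_div₀ (by linarith) (by linarith) hD2 (by linarith)
  · set c : ℝ := (2:ℝ)^(1/(2*p)) with hcdef
    have hc1 : 1 + 1/(4*p) ≤ c := aux_exp p hp
    have hcsq : c * c = (2:ℝ)^(1/p) := aux_sq p hp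
    have hc0 : (0:ℝ) < c := Real.rpow_pos_of_pos (by norm_num) _
    have hc2 : 1 + γbar ≤ c := by linarith
    have k1 : 4*p + S + v t i ≤ (1 + 1/(4*p)) * (4*p + S) := by
      have h1 : (1 + 1/(4*p)) * (4*p + S) = 4*p + S + (4*p + S)/(4*p) := by
        field_simp
      have h2 : (1:ℝ) ≤ (4*p + S)/(4*p) := by
        rw [le_div_iff₀ (by linarith : (0:ℝ) < 4*p)]
        linarith
      linarith
    have k2 : 1 + G + γbar ≤ (1 + γbar) * (1 + (G + γ t)) := by
      nlinarith [mul_nonneg hγbarpos.le (add_nonneg hG hγt0)]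
    have main : (4*p + S + v t i) * (1 + G + γbar)
        ≤ c * c * ((4*p + S) * (1 + (G + γ t))) := by
      calc (4*p + S + v t i) * (1 + G + γbar)
          ≤ ((1 + 1/(4*p)) * (4*p + S)) * ((1 + γbar) * (1 + (G + γ t))) := by
            apply mul_le_mul k1 k2 (by linarith) (by positivity)
        _ ≤ (c * (4*p + S)) * (c * (1 + (G + γ t))) := by
            apply mul_le_mul
            · exact mul_le_mul_of_nonneg_right hc1 hA.le
            · exact mul_le_mul_of_nonneg_right hc2 (by linarith)
            · positivity
            · positivity
        _ = c * c * ((4*p + S) * (1 + (G + γ t))) := by ring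
    rw [← mul_div_assoc, div_le_div_iff₀ hD2 hD1, ← hcsq]
    nlinarith [main]
end

section
/- Let γ₁, …, γ_n ∈ {0, γ̄} with γ̄ ≤ 1/(4p), ∑_t γ_t = 1, and p ≥ 1 a positive integer. Then there exist times t₁ ≤ t₂ ≤ … ≤ t_p in [n] such that for each i, the partial sum γ₁ + … + γ_{t_i} lies in [2^{i/p} − 1, 2^{i/p} − 1 + γ̄], and consequently for every t with t_{i-1} < t ≤ t_i (setting t₀ = 0), (1 + γ₁+…+γ_{t_i-1} + γ̄)/(1 + γ₁+…+γ_{t-1} + γ̄) ≤ e^{1/p}. -/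
open Finset

/-- with γ₁,…,γ_n ∈ {0, γ̄}, 0 < γ̄ ≤ 1/(4p), ∑γ_t = 1 and p ≥ 1 an integer, there
are times 0 = τ₀ ≤ τ₁ ≤ … ≤ τ_p in [n] with γ_{1:τᵢ} ∈ [2^{i/p} − 1, 2^{i/p} − 1 + γ̄], and for
every t with τ_{i-1} < t ≤ τᵢ one has
(1 + γ_{1:τᵢ−1} + γ̄)/(1 + γ_{1:t−1} + γ̄) ≤ e^{1/p}. -/
theorem stmt16 (n p : ℕ) (hp : 1 ≤ p) (γ : ℕ → ℝ) (γbar : ℝ)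
    (hγbarpos : 0 < γbar) (hγbar : γbar ≤ 1 / (4 * (p : ℝ)))
    (hγ : ∀ t, 1 ≤ t → t ≤ n → γ t = 0 ∨ γ t = γbar)
    (hsum : ∑ t ∈ Finset.Icc 1 n, γ t = 1) :
    ∃ τ : ℕ → ℕ, τ 0 = 0 ∧
      (∀ i, 1 ≤ i → i ≤ p →
        τ (i - 1) ≤ τ i ∧ 1 ≤ τ i ∧ τ i ≤ n ∧
        (∑ t ∈ Finset.Icc 1 (τ i), γ t) ∈
          Set.Icc ((2 : ℝ) ^ ((i : ℝ) / p) - 1) ((2 : ℝ) ^ ((i : ℝ) / p) - 1 + γbar)) ∧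
      (∀ i, 1 ≤ i → i ≤ p → ∀ t, τ (i - 1) < t → t ≤ τ i →
        (1 + (∑ t' ∈ Finset.Icc 1 (τ i - 1), γ t') + γbar) /
            (1 + (∑ t' ∈ Finset.Icc 1 (t - 1), γ t') + γbar)
          ≤ Real.exp (1 / (p : ℝ))) := by
  classical
  have hppos : (0:ℝ) < p := by exact_mod_cast hp
  set S : ℕ → ℝ := fun t => ∑ t' ∈ Finset.Icc 1 t, γ t' with hSdef
  have hS0 : S 0 = 0 := by simp [hSdef]
  have hSn : S n = 1 := hsum
  have hγnn : ∀ t, 1 ≤ t → t ≤ n → 0 ≤ γ t := by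
    intro t h1 h2
    rcases hγ t h1 h2 with h | h <;> simp [h, hγbarpos.le]
  have hmono : ∀ s t, s ≤ t → t ≤ n → S s ≤ S t := by
    intro s t hst htn
    apply Finset.sum_le_sum_of_subset_of_nonneg (Finset.Icc_subset_Icc_right hst)
    intro x hx _
    have hx' := Finset.mem_Icc.mp hx
    exact hγnn x hx'.1 (le_trans hx'.2 htn)
  have hstep : ∀ t, 1 ≤ t → t ≤ n → S t ≤ S (t-1) + γbar := by
    intro t ht htn
    obtain ⟨t', rfl⟩ : ∃ t', t = t' + 1 := ⟨t - 1, by omega⟩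
    have hdecomp : S (t' + 1) = S t' + γ (t' + 1) := by
      simp [hSdef, Finset.sum_Icc_succ_top (Nat.le_add_left 1 t')]
    have : γ (t' + 1) ≤ γbar := by
      rcases hγ (t'+1) (by omega) htn with h | h <;> rw [h]
      all_goals first | exact hγbarpos.le | exact le_refl γbar
    simp only [Nat.add_sub_cancel]
    linarith [hdecomp]
  set c : ℕ → ℝ := fun i => (2:ℝ) ^ ((i:ℝ)/p) - 1 with hcdef
  have hcmono : ∀ i j, i ≤ j → c i ≤ c j := by
    intro i j hij
    have : (2:ℝ) ^ ((i:ℝ)/p) ≤ (2:ℝ) ^ ((j:ℝ)/p) := by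
      apply Real.rpow_le_rpow_of_exponent_le one_le_two
      gcongr <;> exact_mod_cast hij
    simp only [hcdef]; linarith
  have hcle : ∀ i, i ≤ p → c i ≤ 1 := by
    intro i hi
    have : (2:ℝ) ^ ((i:ℝ)/p) ≤ (2:ℝ) ^ (1:ℝ) := by
      apply Real.rpow_le_rpow_of_exponent_le one_le_two
      rw [div_le_one hppos]
      exact_mod_cast hi
    simp only [hcdef]
    rw [Real.rpow_one] at this
    linarith
  have hcpos : ∀ i, 1 ≤ i → 0 < c i := by
    intro i hi
    have hipos : (0:ℝ) < (i:ℝ)/p := by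
      apply div_pos _ hppos
      exact_mod_cast hi
    have : (1:ℝ) < (2:ℝ) ^ ((i:ℝ)/p) :=
      (Real.one_lt_rpow_iff_of_pos two_pos).mpr (Or.inl ⟨one_lt_two, hipos⟩)
    simp only [hcdef]; linarith
  have hc0 : c 0 = 0 := by simp [hcdef]
  have hex : ∀ i, ∃ t, c (min i p) ≤ S t := by
    intro i
    exact ⟨n, by rw [hSn]; exact hcle _ (min_le_right i p)⟩
  set τ : ℕ → ℕ := fun i => Nat.find (hex i) with hτdef
  have hspec : ∀ i, c (min i p) ≤ S (τ i) := fun i => Nat.find_spec (hex i)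
  have hminim : ∀ i t, t < τ i → S t < c (min i p) := by
    intro i t ht
    by_contra h
    exact Nat.find_min (hex i) ht (not_lt.mp h)
  have hτn : ∀ i, τ i ≤ n := by
    intro i
    apply Nat.find_le
    rw [hSn]; exact hcle _ (min_le_right i p)
  have hτ0 : τ 0 = 0 := by
    have : c (min 0 p) ≤ S 0 := by simp [hS0, hc0]
    exact Nat.eq_zero_of_le_zero (Nat.find_le this)
  have hτ1 : ∀ i, 1 ≤ i → i ≤ p → 1 ≤ τ i := by
    intro i h1 h2
    by_contra h
    have h0 : τ i = 0 := by omega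
    have := hspec i
    rw [h0, hS0, min_eq_left h2] at this
    exact absurd this (not_le.mpr (hcpos i h1))
  have hτmono : ∀ i j, i ≤ j → τ i ≤ τ j := by
    intro i j hij
    apply Nat.find_le
    exact le_trans (hcmono _ _ (min_le_min_right p hij)) (hspec j)
  refine ⟨τ, hτ0, ?_, ?_⟩
  · intro i h1 h2
    have hmin : min i p = i := min_eq_left h2
    refine ⟨hτmono _ _ (Nat.sub_le i 1), hτ1 i h1 h2, hτn i, ?_, ?_⟩
    · have := hspec i; rw [hmin] at this; exact this
    · have hlt : S (τ i - 1) < c i := by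
        have := hminim i (τ i - 1) (by have := hτ1 i h1 h2; omega)
        rwa [hmin] at this
      have := hstep (τ i) (hτ1 i h1 h2) (hτn i)
      simp only [hcdef] at hlt ⊢
      linarith
  · intro i h1 h2 t hta htb
    have hmin : min i p = i := min_eq_left h2
    have hτi1 : 1 ≤ τ i := hτ1 i h1 h2
    -- numerator bound
    have hnum : S (τ i - 1) < c i := by
      have := hminim i (τ i - 1) (by omega)
      rwa [hmin] at this
    -- denominator bound
    have hden : c (i-1) ≤ S (t-1) := by
      have h' : S (τ (i-1)) ≤ S (t-1) := hmono _ _ (by omega) (by have := hτn i; omega)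
      have := hspec (i-1)
      rw [min_eq_left (by omega)] at this
      linarith
    have hBpos : (0:ℝ) < (2:ℝ) ^ (((i-1:ℕ):ℝ)/p) := Real.rpow_pos_of_pos two_pos _
    have hB1 : (1:ℝ) ≤ (2:ℝ) ^ (((i-1:ℕ):ℝ)/p) :=
      Real.one_le_rpow one_le_two (by positivity)
    have hdenpos : (0:ℝ) < 1 + S (t-1) + γbar := by
      simp only [hcdef] at hden
      nlinarith
    have key : (1 + S (τ i - 1) + γbar) / (1 + S (t-1) + γbar)
        ≤ ((2:ℝ) ^ ((i:ℝ)/p) + γbar) / ((2:ℝ) ^ (((i-1:ℕ):ℝ)/p)) := by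
      apply div_le_div₀ (by positivity) _ hBpos _
      · simp only [hcdef] at hnum; linarith
      · simp only [hcdef] at hden; linarith
    refine le_trans key ?_
    -- now pure arithmetic
    have hsplit : ((i:ℝ))/p = ((i-1:ℕ):ℝ)/p + 1/p := by
      have : ((i-1:ℕ):ℝ) = (i:ℝ) - 1 := by
        push_cast [Nat.cast_sub h1]; ring
      rw [this]; field_simp; ring
    have hfact : (2:ℝ) ^ ((i:ℝ)/p) = (2:ℝ) ^ (((i-1:ℕ):ℝ)/p) * (2:ℝ) ^ ((1:ℝ)/p) := by
      rw [hsplit, Real.rpow_add two_pos]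
    have h2p1 : (1:ℝ) ≤ (2:ℝ) ^ ((1:ℝ)/p) := Real.one_le_rpow one_le_two (by positivity)
    have hend : (2:ℝ) ^ ((1:ℝ)/p) * (1 + γbar) ≤ Real.exp (1/(p:ℝ)) := by
      rw [Real.rpow_def_of_pos two_pos]
      have h1' : (1:ℝ) + γbar ≤ Real.exp γbar := by
        have := Real.add_one_le_exp γbar; linarith
      calc Real.exp (Real.log 2 * (1/p)) * (1 + γbar)
          ≤ Real.exp (Real.log 2 * (1/p)) * Real.exp γbar := by
            apply mul_le_mul_of_nonneg_left h1' (Real.exp_nonneg _)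
        _ = Real.exp (Real.log 2 * (1/p) + γbar) := (Real.exp_add _ _).symm
        _ ≤ Real.exp (1/(p:ℝ)) := by
            apply Real.exp_le_exp.mpr
            have hlog : Real.log 2 ≤ 3/4 := by
              nlinarith [Real.log_two_lt_d9]
            have h1p : (0:ℝ) < 1/(p:ℝ) := by positivity
            have hγ' : γbar ≤ (1/4) * (1/(p:ℝ)) := by
              rw [one_div (4*(p:ℝ))] at hγbar
              calc γbar ≤ (4*(p:ℝ))⁻¹ := hγbar
                _ = (1/4) * (1/(p:ℝ)) := by field_simp
            nlinarith [hlog, hγ', h1p]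
    calc ((2:ℝ) ^ ((i:ℝ)/p) + γbar) / ((2:ℝ) ^ (((i-1:ℕ):ℝ)/p))
        = (2:ℝ) ^ ((1:ℝ)/p) + γbar / ((2:ℝ) ^ (((i-1:ℕ):ℝ)/p)) := by
          rw [hfact]; field_simp
      _ ≤ (2:ℝ) ^ ((1:ℝ)/p) + γbar := by
          have : γbar / ((2:ℝ) ^ (((i-1:ℕ):ℝ)/p)) ≤ γbar := by
            rw [div_le_iff₀ hBpos]
            have hmm := mul_le_mul_of_nonneg_left hB1 hγbarpos.le
            linarith
          linarith
      _ ≤ (2:ℝ) ^ ((1:ℝ)/p) * (1 + γbar) := by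
          have heq : (2:ℝ) ^ ((1:ℝ)/p) * (1 + γbar)
              = (2:ℝ) ^ ((1:ℝ)/p) + (2:ℝ) ^ ((1:ℝ)/p) * γbar := by ring
          have hmm := mul_le_mul_of_nonneg_right h2p1 hγbarpos.le
          rw [heq]
          linarith
      _ ≤ Real.exp (1/(p:ℝ)) := hend
end

section
/- (Adversarial domination bound) Let ψ : ℝ₊^m → ℝ₊ be convex, non-decreasing, ψ(0)=0, superadditive (ψ(u+v) ≥ ψ(u)+ψ(v)), with conjugate satisfying ψ*(δy) ≤ δ·ψ*(y) for δ ∈ (0,1]. Let y₁, …, y_n ∈ ℝ₊^m, v₁*, …, v_n* ∈ ℝ₊^m, and suppose there is a set T ⊆ [n] with |T| = p such that for every t there exists t' ∈ T with y_t ≤ e·y_{t'} coordinatewise. Then for all α ≥ 1: ∑_t ⟨y_t, v_t*⟩ ≤ e·ψ(α ∑_t v_t*) + (ep/α)·max_t ψ*(y_t). -/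
open Finset

/-- Adversarial domination bound: for ψ convex, non-decreasing, ψ(0)=0,
superadditive, with ψ*(δy) ≤ δψ*(y) for δ ∈ (0,1], and vectors y_t, v_t* ≥ 0 such that a set T
of p time steps dominates all the y_t's up to a factor e, one has for all α ≥ 1:
∑_t ⟨y_t, v_t*⟩ ≤ e·ψ(α ∑_t v_t*) + (ep/α)·max_t ψ*(y_t). -/
theorem stmt17 {m : ℕ} (n p : ℕ) (hn : 0 < n)
    (ψ : (Fin m → ℝ) → ℝ)
    (hconv : ConvexOn ℝ {u : Fin m → ℝ | 0 ≤ u} ψ)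
    (hmono : ∀ u v : Fin m → ℝ, 0 ≤ u → u ≤ v → ψ u ≤ ψ v)
    (hψnonneg : ∀ u : Fin m → ℝ, 0 ≤ u → 0 ≤ ψ u)
    (hzero : ψ 0 = 0)
    (hsuper : ∀ u v : Fin m → ℝ, 0 ≤ u → 0 ≤ v → ψ u + ψ v ≤ ψ (u + v))
    (hbdd : ∀ y : Fin m → ℝ, BddAbove {z : ℝ | ∃ u : Fin m → ℝ, 0 ≤ u ∧ z = (∑ i, u i * y i) - ψ u})
    (hconjscale : ∀ y : Fin m → ℝ, 0 ≤ y → ∀ δ : ℝ, 0 < δ → δ ≤ 1 →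
      conjStar ψ (δ • y) ≤ δ * conjStar ψ y)
    (y : Fin n → (Fin m → ℝ)) (vstar : Fin n → (Fin m → ℝ))
    (hy : ∀ t, 0 ≤ y t) (hv : ∀ t, 0 ≤ vstar t)
    (T : Finset (Fin n)) (hT : T.card = p)
    (hdom : ∀ t : Fin n, ∃ t' ∈ T, ∀ i, y t i ≤ Real.exp 1 * y t' i) :
    ∀ α : ℝ, 1 ≤ α →
      ∑ t, ∑ i, y t i * vstar t i ≤
        Real.exp 1 * ψ (α • ∑ t, vstar t) +
          (Real.exp 1 * p / α) * ⨆ t, conjStar ψ (y t) := by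
  intro α hα
  classical
  haveI : Nonempty (Fin n) := Fin.pos_iff_nonempty.mp hn
  have hα0 : (0:ℝ) < α := lt_of_lt_of_le one_pos hα
  have he : (0:ℝ) < Real.exp 1 := Real.exp_pos 1
  -- Fenchel inequality
  have fenchel : ∀ (u yy : Fin m → ℝ), 0 ≤ u →
      (∑ i, u i * yy i) - ψ u ≤ conjStar ψ yy := fun u yy hu =>
    le_csSup (hbdd yy) ⟨u, hu, rfl⟩
  -- superadditivity over finsets
  have sumsuper : ∀ (S : Finset (Fin n)) (f : Fin n → (Fin m → ℝ)),
      (∀ t, 0 ≤ f t) → ∑ t ∈ S, ψ (f t) ≤ ψ (∑ t ∈ S, f t) := by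
    intro S f hf
    refine Finset.induction_on S ?_ ?_
    · simp [hzero]
    · intro a S' ha ih
      rw [Finset.sum_insert ha, Finset.sum_insert ha]
      calc ψ (f a) + ∑ t ∈ S', ψ (f t) ≤ ψ (f a) + ψ (∑ t ∈ S', f t) := by linarith
        _ ≤ ψ (f a + ∑ t ∈ S', f t) :=
          hsuper _ _ (hf a) (Finset.sum_nonneg fun t _ => hf t)
  choose σ hσT hσ using hdom
  set w : Fin n → (Fin m → ℝ) :=
    fun t' => ∑ t ∈ univ.filter (fun t => σ t = t'), vstar t with hw
  have hw0 : ∀ t', 0 ≤ w t' := fun t' => Finset.sum_nonneg fun t _ => hv t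
  have hwsum : ∑ t' ∈ T, w t' = ∑ t, vstar t :=
    Finset.sum_fiberwise_of_maps_to (fun t _ => hσT t) vstar
  -- step 1: domination and regrouping
  have h1 : ∑ t, ∑ i, y t i * vstar t i ≤
      Real.exp 1 * ∑ t' ∈ T, ∑ i, y t' i * w t' i := by
    have ha : ∑ t, ∑ i, y t i * vstar t i ≤
        Real.exp 1 * ∑ t, ∑ i, y (σ t) i * vstar t i := by
      rw [Finset.mul_sum]
      refine Finset.sum_le_sum fun t _ => ?_
      rw [Finset.mul_sum]
      refine Finset.sum_le_sum fun i _ => ?_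
      rw [← mul_assoc]
      exact mul_le_mul_of_nonneg_right (hσ t i) (hv t i)
    have hb : ∑ t, ∑ i, y (σ t) i * vstar t i = ∑ t' ∈ T, ∑ i, y t' i * w t' i := by
      rw [← Finset.sum_fiberwise_of_maps_to (fun t _ => hσT t)
        (fun t => ∑ i, y (σ t) i * vstar t i)]
      refine Finset.sum_congr rfl fun t' ht' => ?_
      have : ∀ t ∈ univ.filter (fun t => σ t = t'),
          ∑ i, y (σ t) i * vstar t i = ∑ i, y t' i * vstar t i := by
        intro t ht
        have : σ t = t' := (Finset.mem_filter.mp ht).2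
        rw [this]
      rw [Finset.sum_congr rfl this, Finset.sum_comm]
      refine Finset.sum_congr rfl fun i _ => ?_
      rw [hw]
      simp [Finset.sum_apply, Finset.mul_sum]
    calc ∑ t, ∑ i, y t i * vstar t i ≤
        Real.exp 1 * ∑ t, ∑ i, y (σ t) i * vstar t i := ha
      _ = Real.exp 1 * ∑ t' ∈ T, ∑ i, y t' i * w t' i := by rw [hb]
  -- step 2: Fenchel on each group
  have h2 : ∀ t' ∈ T, ∑ i, y t' i * w t' i ≤
      ψ (α • w t') + (1/α) * conjStar ψ (y t') := by
    intro t' _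
    have hf := fenchel (α • w t') ((1/α) • y t') (smul_nonneg hα0.le (hw0 t'))
    have heq : ∑ i, (α • w t') i * ((1/α) • y t') i = ∑ i, y t' i * w t' i := by
      refine Finset.sum_congr rfl fun i _ => ?_
      simp only [Pi.smul_apply, smul_eq_mul]
      field_simp
    rw [heq] at hf
    have hsc := hconjscale (y t') (hy t') (1/α) (by positivity)
      (by rw [div_le_one hα0]; exact hα)
    linarith
  -- step 3: superadditivity
  have h3 : ∑ t' ∈ T, ψ (α • w t') ≤ ψ (α • ∑ t, vstar t) := by
    have := sumsuper T (fun t' => α • w t') (fun t' => smul_nonneg hα0.le (hw0 t'))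
    rwa [← Finset.smul_sum, hwsum] at this
  -- step 4: sup bound
  have h4 : ∑ t' ∈ T, (1/α) * conjStar ψ (y t') ≤
      (p / α) * ⨆ t, conjStar ψ (y t) := by
    have hb : BddAbove (Set.range fun t => conjStar ψ (y t)) :=
      (Set.finite_range _).bddAbove
    have hle : ∀ t' ∈ T, conjStar ψ (y t') ≤ ⨆ t, conjStar ψ (y t) :=
      fun t' _ => le_ciSup hb t'
    have hsum : ∑ t' ∈ T, conjStar ψ (y t') ≤ (p : ℝ) * ⨆ t, conjStar ψ (y t) := by
      calc ∑ t' ∈ T, conjStar ψ (y t') ≤ T.card • ⨆ t, conjStar ψ (y t) :=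
          Finset.sum_le_card_nsmul _ _ _ hle
        _ = (p : ℝ) * ⨆ t, conjStar ψ (y t) := by rw [hT, nsmul_eq_mul]
    calc ∑ t' ∈ T, (1/α) * conjStar ψ (y t')
        = (1/α) * ∑ t' ∈ T, conjStar ψ (y t') := by rw [Finset.mul_sum]
      _ ≤ (1/α) * ((p : ℝ) * ⨆ t, conjStar ψ (y t)) := by
          apply mul_le_mul_of_nonneg_left hsum (by positivity)
      _ = (p / α) * ⨆ t, conjStar ψ (y t) := by ring
  -- combine
  have h5 : ∑ t' ∈ T, ∑ i, y t' i * w t' i ≤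
      ψ (α • ∑ t, vstar t) + (p / α) * ⨆ t, conjStar ψ (y t) := by
    calc ∑ t' ∈ T, ∑ i, y t' i * w t' i
        ≤ ∑ t' ∈ T, (ψ (α • w t') + (1/α) * conjStar ψ (y t')) :=
          Finset.sum_le_sum h2
      _ = ∑ t' ∈ T, ψ (α • w t') + ∑ t' ∈ T, (1/α) * conjStar ψ (y t') :=
          Finset.sum_add_distrib
      _ ≤ ψ (α • ∑ t, vstar t) + (p / α) * ⨆ t, conjStar ψ (y t) :=
          add_le_add h3 h4
  calc ∑ t, ∑ i, y t i * vstar t i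
      ≤ Real.exp 1 * ∑ t' ∈ T, ∑ i, y t' i * w t' i := h1
    _ ≤ Real.exp 1 * (ψ (α • ∑ t, vstar t) + (p / α) * ⨆ t, conjStar ψ (y t)) :=
        mul_le_mul_of_nonneg_left h5 he.le
    _ = Real.exp 1 * ψ (α • ∑ t, vstar t) +
        (Real.exp 1 * p / α) * ⨆ t, conjStar ψ (y t) := by ring
end

section
/- (Stochastic linearization bound) Let ψ : ℝ₊^m → ℝ₊ be convex with conjugate ψ*, and let (v_t*)_{t∈S} be i.i.d. random vectors in ℝ₊^m indexed by a set S of size s, with 𝔼 v_t* = μ. Let (y_t)_{t∈S} be random vectors in ℝ₊^m such that y_t is independent of v_t* for each t (y_t measurable w.r.t. the history before time t). Then with β = n/s: 𝔼 ∑_{t∈S} [⟨y_t, v_t*⟩ − (1/n)ψ*(y_t)] ≤ (1/β)·ψ(β·s·μ). -/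
open Finset MeasureTheory

/-- Stochastic linearization bound: with i.i.d. non-negative random vectors
(v_t*)_{t ∈ S}, |S| = s, 𝔼 v_t* = μ, and random non-negative y_t independent of v_t*, for
β = n/s:  𝔼 ∑_{t ∈ S} [⟨y_t, v_t*⟩ − (1/n)ψ*(y_t)] ≤ (1/β)·ψ(β·s·μ). -/
theorem stmt19 {m : ℕ} {Ω : Type*} [MeasurableSpace Ω] (P : Measure Ω)
    [IsProbabilityMeasure P]
    (n s : ℕ) (hs : 0 < s) (hsn : s ≤ n)
    (ψ : (Fin m → ℝ) → ℝ)
    (hconv : ConvexOn ℝ {u : Fin m → ℝ | 0 ≤ u} ψ)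
    (hmono : ∀ u v : Fin m → ℝ, 0 ≤ u → u ≤ v → ψ u ≤ ψ v)
    (hψnonneg : ∀ u : Fin m → ℝ, 0 ≤ u → 0 ≤ ψ u)
    (hzero : ψ 0 = 0)
    (hbdd : ∀ y : Fin m → ℝ, BddAbove {z : ℝ | ∃ u : Fin m → ℝ, 0 ≤ u ∧ z = (∑ i, u i * y i) - ψ u})
    (v : Fin s → Ω → (Fin m → ℝ)) (y : Fin s → Ω → (Fin m → ℝ)) (μv : Fin m → ℝ)
    (hvnonneg : ∀ t ω, 0 ≤ v t ω) (hynonneg : ∀ t ω, 0 ≤ y t ω)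
    (hmean : ∀ t i, ∫ ω, v t ω i ∂P = μv i)
    (hident : ∀ t t' : Fin s, ProbabilityTheory.IdentDistrib (v t) (v t') P P)
    (hiid : ProbabilityTheory.iIndepFun v P)
    (hindep : ∀ t, ProbabilityTheory.IndepFun (y t) (v t) P)
    (hIntv : ∀ t i, Integrable (fun ω => v t ω i) P)
    (hInty : ∀ t i, Integrable (fun ω => y t ω i) P)
    (hIntyv : ∀ t i, Integrable (fun ω => y t ω i * v t ω i) P)
    (hIntconj : ∀ t, Integrable (fun ω => conjStar ψ (y t ω)) P) :
    (∫ ω, ∑ t, ((∑ i, y t ω i * v t ω i) - (1 / (n : ℝ)) * conjStar ψ (y t ω)) ∂P)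
      ≤ ((s : ℝ) / n) * ψ (((n : ℝ) / s) • ((s : ℝ) • μv)) := by
  have hn : 0 < (n:ℝ) := by exact_mod_cast lt_of_lt_of_le hs hsn
  have hs' : 0 < (s:ℝ) := by exact_mod_cast hs
  set u₀ : Fin m → ℝ := ((n : ℝ) / s) • ((s : ℝ) • μv) with hu₀def
  have hμnonneg : (0:Fin m → ℝ) ≤ μv := by
    intro i
    rw [← hmean ⟨0, hs⟩ i]
    exact integral_nonneg (fun ω => (hvnonneg _ ω) i)
  have hu₀nonneg : (0:Fin m → ℝ) ≤ u₀ := by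
    intro i
    simp only [hu₀def, Pi.smul_apply, smul_eq_mul]
    exact mul_nonneg (by positivity) (mul_nonneg hs'.le (hμnonneg i))
  set c := ψ u₀ with hc
  have hkey : ∀ yv : Fin m → ℝ, (∑ i, u₀ i * yv i) - c ≤ conjStar ψ yv := fun yv =>
    le_csSup (hbdd yv) ⟨u₀, hu₀nonneg, rfl⟩
  have hIntsum : ∀ t, Integrable (fun ω => ∑ i, y t ω i * v t ω i) P := fun t =>
    integrable_finset_sum _ (fun i _ => hIntyv t i)
  have hIntterm : ∀ t, Integrable
      (fun ω => (∑ i, y t ω i * v t ω i) - (1/(n:ℝ)) * conjStar ψ (y t ω)) P := fun t =>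
    (hIntsum t).sub ((hIntconj t).const_mul _)
  rw [integral_finset_sum _ (fun t _ => hIntterm t)]
  have hterm : ∀ t, (∫ ω, ((∑ i, y t ω i * v t ω i) - (1/(n:ℝ)) * conjStar ψ (y t ω)) ∂P)
      ≤ (1/(n:ℝ)) * c := by
    intro t
    rw [integral_sub (hIntsum t) ((hIntconj t).const_mul _),
        integral_finset_sum _ (fun i _ => hIntyv t i), integral_const_mul]
    have hmul : ∀ i, (∫ ω, y t ω i * v t ω i ∂P) = (∫ ω, y t ω i ∂P) * μv i := by
      intro i
      have hind := (hindep t).comp (measurable_pi_apply i) (measurable_pi_apply i)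
      rw [← hmean t i]
      exact ProbabilityTheory.IndepFun.integral_fun_mul_eq_mul_integral hind (hInty t i).aestronglyMeasurable (hIntv t i).aestronglyMeasurable
    have hlower : (∑ i, u₀ i * ∫ ω, y t ω i ∂P) - c ≤ ∫ ω, conjStar ψ (y t ω) ∂P := by
      have h1 : Integrable (fun ω => (∑ i, u₀ i * y t ω i) - c) P :=
        (integrable_finset_sum _ (fun i _ => (hInty t i).const_mul _)).sub (integrable_const c)
      have h2 := integral_mono h1 (hIntconj t) (fun ω => hkey (y t ω))
      rw [integral_sub (integrable_finset_sum _ (fun i _ => (hInty t i).const_mul _))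
        (integrable_const c), integral_finset_sum _ (fun i _ => (hInty t i).const_mul _),
        integral_const, probReal_univ, smul_eq_mul, one_mul] at h2
      simpa only [integral_const_mul] using h2
    have heq : (1/(n:ℝ)) * (∑ i, u₀ i * ∫ ω, y t ω i ∂P)
        = ∑ i, (∫ ω, y t ω i ∂P) * μv i := by
      rw [Finset.mul_sum]
      refine Finset.sum_congr rfl (fun i _ => ?_)
      simp only [hu₀def, Pi.smul_apply, smul_eq_mul]
      field_simp
    calc (∑ i, ∫ ω, y t ω i * v t ω i ∂P) - (1/(n:ℝ)) * ∫ ω, conjStar ψ (y t ω) ∂P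
        ≤ (∑ i, (∫ ω, y t ω i ∂P) * μv i)
            - (1/(n:ℝ)) * ((∑ i, u₀ i * ∫ ω, y t ω i ∂P) - c) := by
          have := hmul
          have h3 : (1/(n:ℝ)) * ((∑ i, u₀ i * ∫ ω, y t ω i ∂P) - c)
              ≤ (1/(n:ℝ)) * ∫ ω, conjStar ψ (y t ω) ∂P := by
            apply mul_le_mul_of_nonneg_left hlower (by positivity)
          have h4 : (∑ i, ∫ ω, y t ω i * v t ω i ∂P) = ∑ i, (∫ ω, y t ω i ∂P) * μv i :=
            Finset.sum_congr rfl (fun i _ => hmul i)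
          linarith
      _ = (1/(n:ℝ)) * c := by rw [mul_sub, heq]; ring
  calc (∑ t, ∫ ω, ((∑ i, y t ω i * v t ω i) - (1/(n:ℝ)) * conjStar ψ (y t ω)) ∂P)
      ≤ ∑ t : Fin s, (1/(n:ℝ)) * c := Finset.sum_le_sum (fun t _ => hterm t)
    _ = ((s:ℝ)/n) * c := by
        rw [Finset.sum_const, Finset.card_univ, Fintype.card_fin, nsmul_eq_mul]
        ring
end
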